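/- Let n, k ≥ 1 and let μ = (μ₁,…,μ_n) be integers with 0 ≤ μ_i ≤ (n−i)k. Let S₁,…,S_n and the k-Stirling permutation s be constructed from μ as follows: starting with S = {1,…,nk}, for i = 1,…,n let S_i consist of the elements of S in positions μ_i+1,…,μ_i+k of the increasing ordering of S and remove S_i from S; set s_j = n+1−i for j ∈ S_i. Then μ is recovered from s: for every 1 ≤ i ≤ n, μ_i = #{ p < j(i) : s_p < s_{j(i)} }, where j(i) is the smallest index with s_{j(i)} = n+1−i (i.e., μ_i equals the number of entries smaller than n+1−i occurring before the first occurrence of n+1−i in s). -/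

import Mathlib

/-- The set of still-unused integers before step `i` of the construction: start with
`{1, …, nk}` and repeatedly remove the chosen `k`-element set. -/
def remSet (n k : ℕ) (μ : ℕ → ℕ) : ℕ → Finset ℕ
  | 0 => Finset.Icc 1 (n * k)
  | i + 1 =>
      remSet n k μ i \
        ((((remSet n k μ i).sort (· ≤ ·)).drop (μ i)).take k).toFinset

/-- `S_{i+1}` (0-based `i`): the `k` elements of the remaining set `remSet i` in
positions `μ_i + 1, …, μ_i + k` of its increasing ordering. -/
def Sset (n k : ℕ) (μ : ℕ → ℕ) (i : ℕ) : Finset ℕ :=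
  ((((remSet n k μ i).sort (· ≤ ·)).drop (μ i)).take k).toFinset

/-- The sequence `s`: `s j = n + 1 − i` (1-based `i`) for `j ∈ S_i`. -/
def stirling (n k : ℕ) (μ : ℕ → ℕ) (j : ℕ) : ℕ :=
  ∑ i ∈ Finset.range n, if j ∈ Sset n k μ i then n - i else 0

namespace Stmt16Aux

variable (n k : ℕ) (μ : ℕ → ℕ)

lemma sset_sublist (i : ℕ) :
    (((((remSet n k μ i).sort (· ≤ ·)).drop (μ i)).take k)).Sublist
      ((remSet n k μ i).sort (· ≤ ·)) :=
  (List.take_sublist _ _).trans (List.drop_sublist _ _)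

lemma sset_nodup (i : ℕ) :
    (((((remSet n k μ i).sort (· ≤ ·)).drop (μ i)).take k)).Nodup :=
  (sset_sublist n k μ i).nodup (Finset.sort_nodup _ _)

lemma Sset_subset (i : ℕ) : Sset n k μ i ⊆ remSet n k μ i := by
  intro x hx
  rw [Sset, List.mem_toFinset] at hx
  have := (sset_sublist n k μ i).subset hx
  rwa [Finset.mem_sort] at this

lemma remSet_succ (i : ℕ) : remSet n k μ (i + 1) = remSet n k μ i \ Sset n k μ i := rfl

lemma remSet_subset {i j : ℕ} (h : i ≤ j) : remSet n k μ j ⊆ remSet n k μ i := by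
  induction j with
  | zero => simp_all
  | succ j ih =>
    rcases Nat.lt_or_ge i (j + 1) with h' | h'
    · exact (Finset.sdiff_subset).trans (ih (Nat.lt_succ_iff.mp h'))
    · have : i = j + 1 := le_antisymm h h'
      subst this; exact subset_rfl

variable (hk : 1 ≤ k) (hμ : ∀ i, i < n → μ i ≤ (n - 1 - i) * k)

include hk hμ in
lemma card_remSet : ∀ i, i ≤ n → (remSet n k μ i).card = (n - i) * k := by
  intro i
  induction i with
  | zero => intro _; simp [remSet, Nat.card_Icc]
  | succ i ih =>
    intro h
    have hin : i < n := h
    have hci := ih hin.le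
    have hlen : ((remSet n k μ i).sort (· ≤ ·)).length = (n - i) * k := by
      rw [Finset.length_sort, hci]
    have hμi : μ i + k ≤ (n - i) * k := by
      have h1 := hμ i hin
      have h2 : (n - 1 - i) * k + k = (n - i) * k := by
        have : n - 1 - i + 1 = n - i := by omega
        rw [← this]; ring
      omega
    have hScard : (Sset n k μ i).card = k := by
      rw [Sset, List.toFinset_card_of_nodup (sset_nodup n k μ i)]
      rw [List.length_take, List.length_drop, hlen]
      omega
    rw [remSet_succ, Finset.card_sdiff_of_subset (Sset_subset n k μ i), hScard, hci]
    have : n - i = (n - (i + 1)) + 1 := by omega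
    rw [this]; ring_nf; omega

include hk hμ in
lemma exists_mem_Sset {p : ℕ} (hp : p ∈ Finset.Icc 1 (n * k)) :
    ∃ i < n, p ∈ Sset n k μ i := by
  have key : ∀ i, i ≤ n → p ∈ remSet n k μ i ∨ ∃ i' < i, p ∈ Sset n k μ i' := by
    intro i
    induction i with
    | zero => intro _; left; exact hp
    | succ i ih =>
      intro h
      rcases ih (Nat.le_of_succ_le h) with h' | ⟨i', hi', h'⟩
      · by_cases hs : p ∈ Sset n k μ i
        · exact Or.inr ⟨i, Nat.lt_succ_self i, hs⟩
        · left; rw [remSet_succ, Finset.mem_sdiff]; exact ⟨h', hs⟩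
      · exact Or.inr ⟨i', hi'.trans (Nat.lt_succ_self i), h'⟩
  rcases key n le_rfl with h | ⟨i', hi', h⟩
  · exfalso
    have := card_remSet n k μ hk hμ n le_rfl
    simp only [Nat.sub_self, Nat.zero_mul, Finset.card_eq_zero] at this
    rw [this] at h
    exact absurd h (Finset.notMem_empty p)
  · exact ⟨i', hi', h⟩

lemma Sset_disjoint {i i' : ℕ} (h : i < i') {p : ℕ} (hp : p ∈ Sset n k μ i)
    (hp' : p ∈ Sset n k μ i') : False := by
  have h1 : p ∈ remSet n k μ i' := Sset_subset n k μ i' hp'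
  have h2 : p ∈ remSet n k μ (i + 1) := remSet_subset n k μ h h1
  rw [remSet_succ, Finset.mem_sdiff] at h2
  exact h2.2 hp

lemma Sset_unique {i i' : ℕ} (hp : p ∈ Sset n k μ i) (hp' : p ∈ Sset n k μ i') :
    i = i' := by
  rcases lt_trichotomy i i' with h | h | h
  · exact (Sset_disjoint n k μ h hp hp').elim
  · exact h
  · exact (Sset_disjoint n k μ h hp' hp).elim

lemma stirling_of_mem {i p : ℕ} (hin : i < n) (hp : p ∈ Sset n k μ i) :
    stirling n k μ p = n - i := by
  rw [stirling, Finset.sum_eq_single i]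
  · simp [hp]
  · intro b hb hne
    rw [if_neg]
    intro hpb
    exact hne (Sset_unique n k μ hpb hp)
  · intro h; exact absurd (Finset.mem_range.2 hin) h

lemma mem_of_stirling {i p : ℕ} (hin : i < n) (hs : stirling n k μ p = n - i) :
    p ∈ Sset n k μ i := by
  have hne : stirling n k μ p ≠ 0 := by rw [hs]; omega
  rw [stirling] at hne
  obtain ⟨i', hi', h⟩ := Finset.exists_ne_zero_of_sum_ne_zero hne
  rw [Finset.mem_range] at hi'
  have hmem : p ∈ Sset n k μ i' := by
    by_contra h'; simp [h'] at h
  have h2 := stirling_of_mem n k μ hi' hmem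
  have : i' = i := by
    rw [hs] at h2; omega
  subst this; exact hmem

end Stmt16Aux


open Stmt16Aux in
/-- `μ` is recovered from the `k`-Stirling permutation `s` constructed
from it: for `1 ≤ i ≤ n` (0-based `i < n` here), `μ_i` equals the number of entries
smaller than `n + 1 − i` occurring before the first occurrence `j(i)` of `n + 1 − i`
in `s`. -/
theorem stmt16 (n k : ℕ) (hn : 1 ≤ n) (hk : 1 ≤ k) (μ : ℕ → ℕ)
    (hμ : ∀ i, i < n → μ i ≤ (n - 1 - i) * k)
    (i : ℕ) (hi : i < n) (ji : ℕ) (hji1 : 1 ≤ ji)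
    (hjiv : stirling n k μ ji = n - i)
    (hjimin : ∀ p, 1 ≤ p → p < ji → stirling n k μ p ≠ n - i) :
    μ i = ((Finset.Ico 1 ji).filter fun p => stirling n k μ p < n - i).card := by
  set L := (remSet n k μ i).sort (· ≤ ·) with hL
  set m := μ i with hm
  -- basic facts
  have hci := card_remSet n k μ hk hμ i hi.le
  have hlen : L.length = (n - i) * k := by rw [hL, Finset.length_sort, hci]
  have hmk : m + k ≤ L.length := by
    have h1 := hμ i hi
    have h2 : (n - 1 - i) * k + k = (n - i) * k := by
      have : n - 1 - i + 1 = n - i := by omega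
      rw [← this]; ring
    omega
  have hml : m < L.length := by omega
  have hlt : ∀ a b (ha : a < L.length) (hb : b < L.length), a < b → L[a] < L[b] :=
    List.pairwise_iff_getElem.mp (Finset.sortedLT_sort _).pairwise
  have hle : ∀ a b (hb : b < L.length) (hab : a ≤ b), L[a]'(by omega) ≤ L[b] := by
    intro a b hb hab
    rcases Nat.eq_or_lt_of_le hab with he | hl
    · subst he; exact le_rfl
    · exact (hlt a b (by omega) hb hl).le
  -- ji ∈ Sset i
  have hjiS : ji ∈ Sset n k μ i := mem_of_stirling n k μ hi hjiv
  -- ji is the minimum of Sset i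
  have hjimin' : ∀ p ∈ Sset n k μ i, ji ≤ p := by
    intro p hp
    by_contra h
    push_neg at h
    have hp1 : 1 ≤ p := by
      have := remSet_subset n k μ (Nat.zero_le i) (Sset_subset n k μ i hp)
      simp only [remSet, Finset.mem_Icc] at this
      exact this.1
    exact hjimin p hp1 h (stirling_of_mem n k μ hi hp)
  -- elements of Sset i as getElem
  have hmemS : ∀ x, x ∈ Sset n k μ i ↔ ∃ t, ∃ h : t < (L.drop m |>.take k).length,
      (L.drop m |>.take k)[t] = x := by
    intro x
    rw [Sset, List.mem_toFinset, List.mem_iff_getElem]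
  have hgetS : ∀ t (ht : t < (L.drop m |>.take k).length),
      (L.drop m |>.take k)[t] = L[m + t]'(by
        simp [List.length_take, List.length_drop] at ht; omega) := by
    intro t ht
    rw [List.getElem_take, List.getElem_drop]
  have hlentk : (L.drop m |>.take k).length = k := by
    rw [List.length_take, List.length_drop]; omega
  -- ji = L[m]
  have hLmS : L[m] ∈ Sset n k μ i := by
    rw [hmemS]
    refine ⟨0, by omega, ?_⟩
    rw [hgetS 0 (by omega)]
    simp
  have hji_eq : ji = L[m] := by
    refine le_antisymm (hjimin' _ hLmS) ?_
    obtain ⟨t, ht, hx⟩ := (hmemS ji).mp hjiS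
    rw [hgetS t ht] at hx
    rw [← hx]
    rw [hlentk] at ht
    exact hle m (m + t) (by omega) (by omega)
  -- filter over remSet i
  have hfilt1 : (remSet n k μ i).filter (· < ji) = (L.take m).toFinset := by
    ext x
    simp only [Finset.mem_filter, List.mem_toFinset]
    constructor
    · rintro ⟨hx, hxlt⟩
      rw [← Finset.mem_sort (α := ℕ) (· ≤ ·), ← hL, List.mem_iff_getElem] at hx
      obtain ⟨a, ha, hax⟩ := hx
      have ham : a < m := by
        by_contra hcon
        push_neg at hcon
        have h2 := hle m a ha hcon
        rw [hax] at h2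
        omega
      rw [List.mem_iff_getElem]
      exact ⟨a, by rw [List.length_take]; omega, by rw [List.getElem_take]; exact hax⟩
    · intro hx
      rw [List.mem_iff_getElem] at hx
      obtain ⟨a, ha, hax⟩ := hx
      have ha' : a < m := by rw [List.length_take] at ha; omega
      rw [List.getElem_take] at hax
      constructor
      · rw [← Finset.mem_sort (α := ℕ) (· ≤ ·), ← hL]
        rw [← hax]; exact List.getElem_mem _
      · rw [← hax, hji_eq]
        exact hlt a m (by omega) hml ha'
  have hcard1 : ((remSet n k μ i).filter (· < ji)).card = m := by
    rw [hfilt1, List.toFinset_card_of_nodup ((List.take_sublist _ _).nodup (Finset.sort_nodup _ _)),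
      List.length_take, ← hL]
    omega
  -- filter over remSet (i+1) equals filter over remSet i
  have hfilt2 : (remSet n k μ (i + 1)).filter (· < ji) = (remSet n k μ i).filter (· < ji) := by
    ext x
    simp only [Finset.mem_filter, remSet_succ, Finset.mem_sdiff]
    constructor
    · rintro ⟨⟨h1, _⟩, h2⟩; exact ⟨h1, h2⟩
    · rintro ⟨h1, h2⟩
      refine ⟨⟨h1, ?_⟩, h2⟩
      intro hS
      exact absurd (hjimin' x hS) (by omega)
  -- target filter equals filter over remSet (i+1)
  have hjile : ji ≤ n * k := by
    have := remSet_subset n k μ (Nat.zero_le i) (Sset_subset n k μ i hjiS)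
    simp only [remSet, Finset.mem_Icc] at this
    exact this.2
  have hfilt3 : ((Finset.Ico 1 ji).filter fun p => stirling n k μ p < n - i)
      = (remSet n k μ (i + 1)).filter (· < ji) := by
    ext p
    simp only [Finset.mem_filter, Finset.mem_Ico]
    constructor
    · rintro ⟨⟨hp1, hp2⟩, hp3⟩
      have hpIcc : p ∈ Finset.Icc 1 (n * k) := by
        rw [Finset.mem_Icc]; omega
      obtain ⟨ip, hipn, hipm⟩ := exists_mem_Sset n k μ hk hμ hpIcc
      have hst := stirling_of_mem n k μ hipn hipm
      have hiip : i < ip := by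
        by_contra hcon
        push_neg at hcon
        have : n - i ≤ n - ip := Nat.sub_le_sub_left hcon n
        omega
      refine ⟨remSet_subset n k μ (by omega : i + 1 ≤ ip) (Sset_subset n k μ ip hipm), hp2⟩
    · rintro ⟨hp1, hp2⟩
      have hpIcc : p ∈ Finset.Icc 1 (n * k) :=
        remSet_subset n k μ (Nat.zero_le (i + 1)) hp1
      rw [Finset.mem_Icc] at hpIcc
      obtain ⟨ip, hipn, hipm⟩ := exists_mem_Sset n k μ hk hμ (by rw [Finset.mem_Icc]; exact hpIcc)
      have hst := stirling_of_mem n k μ hipn hipm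
      have hiip : i < ip := by
        by_contra hcon
        push_neg at hcon
        have : p ∈ remSet n k μ (ip + 1) := remSet_subset n k μ (by omega) hp1
        rw [remSet_succ, Finset.mem_sdiff] at this
        exact this.2 hipm
      refine ⟨⟨hpIcc.1, hp2⟩, ?_⟩
      rw [hst]
      exact Nat.sub_lt_sub_left hi hiip
  rw [hfilt3, hfilt2, hcard1]
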